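/- Let G(x,t), F(x,t) ∈ K[[x,t]] be formal power series such that G(x,0) = a·x + (higher order terms in x) with a ≠ 0. Let X = X(t) be the unique element of t·K[[t]] with G(X(t), t) = 0. Then the constant term in x of (x/G(x,t))·F(x,t), taken in the field where x/G(x,t) is expanded appropriately, equals F(X(t),t) / (∂G/∂x)(X(t),t). -/

import Mathlib

open PowerSeries

noncomputable section

variable {K : Type*} [Field K] [CharZero K]

/-- Evaluation of a one-variable power series `f ∈ K[[x]]` at a power series
`X ∈ t·K[[t]]` of positive order: the coefficient of `t^M` only receives
contributions from the truncation at order `M`. -/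
noncomputable def evalX (X : PowerSeries K) (f : PowerSeries K) : PowerSeries K :=
  PowerSeries.mk fun M =>
    PowerSeries.coeff (R := K) M (∑ m ∈ Finset.range (M + 1), PowerSeries.C (R := K) (PowerSeries.coeff (R := K) m f) * X ^ m)

/-- For `F ∈ K[[x]][[t]]` (outer variable `t`, inner variable `x`), the series
`F(X(t), t) ∈ K[[t]]` obtained by substituting `x := X(t)` (with `X` of positive
order). -/
noncomputable def evalXt (X : PowerSeries K) (F : PowerSeries (PowerSeries K)) : PowerSeries K :=
  PowerSeries.mk fun M =>
    ∑ N ∈ Finset.range (M + 1),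
      PowerSeries.coeff (R := K) (M - N) (evalX X (PowerSeries.coeff (R := (PowerSeries K)) N F))

/-- Derivative with respect to the inner variable `x` of `G ∈ K[[x]][[t]]`. -/
noncomputable def dX (G : PowerSeries (PowerSeries K)) : PowerSeries (PowerSeries K) :=
  PowerSeries.mk fun N => PowerSeries.derivativeFun (PowerSeries.coeff (R := (PowerSeries K)) N G)


set_option linter.unusedSectionVars false

namespace LagrangeAux

variable {R : Type*} [CommRing R]


variable {R : Type*} [CommRing R]

theorem pow_mul_coeff_eq_zero {Y : PowerSeries R} (hY : constantCoeff (R := R) Y = 0) :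
    ∀ (m : ℕ) (f : PowerSeries R) (M : ℕ), M < m → coeff (R := R) M (Y ^ m * f) = 0 := by
  intro m
  induction m with
  | zero => intro f M h; omega
  | succ m ih =>
    intro f M h
    rw [pow_succ, mul_comm (Y ^ m) Y, mul_assoc, coeff_mul]
    apply Finset.sum_eq_zero
    rintro ⟨a, b⟩ hab
    rw [Finset.HasAntidiagonal.mem_antidiagonal] at hab
    rcases Nat.eq_zero_or_pos a with ha | ha
    · subst ha
      simp [coeff_zero_eq_constantCoeff, hY]
    · have hb : b < m := by omega
      rw [ih f b hb, mul_zero]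

theorem pow_coeff_eq_zero {Y : PowerSeries R} (hY : constantCoeff (R := R) Y = 0)
    {m M : ℕ} (h : M < m) : coeff (R := R) M (Y ^ m) = 0 := by
  simpa using pow_mul_coeff_eq_zero hY m 1 M h

/-- Geometric series: if `w` has zero constant term then `(1-w)` times the
t-adic sum `∑ w^k` is `1`. -/
theorem geom_aux {w : PowerSeries R} (hw : constantCoeff (R := R) w = 0) :
    (1 - w) * (PowerSeries.mk fun N => coeff (R := R) N (∑ k ∈ Finset.range (N + 1), w ^ k)) = 1 := by
  set T : PowerSeries R := PowerSeries.mk fun N => coeff (R := R) N (∑ k ∈ Finset.range (N + 1), w ^ k)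
    with hT
  ext N
  have hwT : coeff (R := R) N (w * T) =
      coeff (R := R) N (∑ k ∈ Finset.range (N + 1), w ^ k) - coeff (R := R) N 1 := by
    have h1 : coeff (R := R) N (w * T) = coeff (R := R) N (w * ∑ k ∈ Finset.range N, w ^ k) := by
      rw [coeff_mul, coeff_mul]
      apply Finset.sum_congr rfl
      rintro ⟨a, b⟩ hab
      rw [Finset.HasAntidiagonal.mem_antidiagonal] at hab
      rcases Nat.eq_zero_or_pos a with ha | ha
      · subst ha
        simp [coeff_zero_eq_constantCoeff, hw]
      · congr 1
        have hb : b < N := by omega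
        rw [hT, coeff_mk, map_sum, map_sum]
        apply Finset.sum_subset (Finset.range_subset_range.2 (by omega : b + 1 ≤ N))
        intro k hk hk'
        simp only [Finset.mem_range] at hk hk'
        exact pow_coeff_eq_zero hw (by omega)
    rw [h1, Finset.mul_sum]
    have h2 : ∑ k ∈ Finset.range N, w * w ^ k = ∑ k ∈ Finset.range N, w ^ (k + 1) := by
      apply Finset.sum_congr rfl; intro k _; rw [pow_succ']
    rw [h2]
    have h3 : ∑ k ∈ Finset.range (N + 1), w ^ k =
        (∑ k ∈ Finset.range N, w ^ (k + 1)) + 1 := by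
      rw [Finset.sum_range_succ']
      simp
    rw [h3]
    simp
  have : coeff (R := R) N ((1 - w) * T) = coeff (R := R) N T - coeff (R := R) N (w * T) := by
    rw [sub_mul, one_mul, map_sub]
  rw [this, hwT, hT, coeff_mk]
  ring



/-- "Order at least the index" condition for `Q ∈ R[[t]][[s]]`. -/
def OrdQ (Q : PowerSeries (PowerSeries R)) : Prop :=
  ∀ ⦃N M : ℕ⦄, M < N → coeff (R := R) M (coeff (R := (PowerSeries R)) N Q) = 0

/-- `τ` : the t-adic sum of all the coefficients (for `OrdQ` series this is the
substitution `s := t`). -/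
noncomputable def tauP (Q : PowerSeries (PowerSeries R)) : PowerSeries R :=
  PowerSeries.mk fun M => ∑ N ∈ Finset.range (M + 1), coeff (R := R) M (coeff (R := (PowerSeries R)) N Q)

theorem tauP_coeff (Q : PowerSeries (PowerSeries R)) (M : ℕ) :
    coeff (R := R) M (tauP Q) = ∑ N ∈ Finset.range (M + 1), coeff (R := R) M (coeff (R := (PowerSeries R)) N Q) :=
  coeff_mk _ _

theorem tauP_coeff_stable {Q : PowerSeries (PowerSeries R)} (hQ : OrdQ Q) {M n : ℕ}
    (h : M < n) :
    coeff (R := R) M (tauP Q) = ∑ N ∈ Finset.range n, coeff (R := R) M (coeff (R := (PowerSeries R)) N Q) := by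
  rw [tauP_coeff]
  apply Finset.sum_subset (Finset.range_subset_range.2 (by omega))
  intro N hN hN'
  simp only [Finset.mem_range] at hN hN'
  exact hQ (by omega)

theorem ordQ_rescale {Y : PowerSeries R} (hY : constantCoeff (R := R) Y = 0)
    (P : PowerSeries (PowerSeries R)) : OrdQ (PowerSeries.rescale Y P) := by
  intro N M h
  rw [coeff_rescale]
  exact pow_mul_coeff_eq_zero hY N _ M h

theorem tauP_add (P Q : PowerSeries (PowerSeries R)) :
    tauP (P + Q) = tauP P + tauP Q := by
  ext M
  simp [tauP_coeff, Finset.sum_add_distrib]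

theorem tauP_one : tauP (1 : PowerSeries (PowerSeries R)) = 1 := by
  ext M
  rw [tauP_coeff]
  rw [Finset.sum_eq_single 0]
  · simp
  · intro N _ hN
    rw [coeff_one]
    simp [hN]
  · intro h
    simp at h

theorem ordQ_mul_coeff {P Q : PowerSeries (PowerSeries R)} (hP : OrdQ P) (hQ : OrdQ Q)
    {i j M : ℕ} (h : M < i + j) :
    coeff (R := R) M (coeff (R := (PowerSeries R)) i P * coeff (R := (PowerSeries R)) j Q) = 0 := by
  rw [coeff_mul]
  apply Finset.sum_eq_zero
  rintro ⟨a, b⟩ hab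
  rw [Finset.HasAntidiagonal.mem_antidiagonal] at hab
  rcases lt_or_ge a i with ha | ha
  · rw [hP ha, zero_mul]
  · rw [hQ (by omega : b < j), mul_zero]

theorem sum_antidiag_range {M : ℕ} (c : ℕ → ℕ → R) (hc : ∀ a b, M < a + b → c a b = 0) :
    ∑ N ∈ Finset.range (M + 1), ∑ p ∈ Finset.HasAntidiagonal.antidiagonal N, c p.1 p.2 =
      ∑ a ∈ Finset.range (M + 1), ∑ b ∈ Finset.range (M + 1), c a b := by
  have hdisj : (↑(Finset.range (M + 1)) : Set ℕ).PairwiseDisjoint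
      (fun N => (Finset.HasAntidiagonal.antidiagonal N : Finset (ℕ × ℕ))) := by
    intro x _ y _ hxy
    simp only [Finset.disjoint_left]
    rintro ⟨a, b⟩ ha hb
    rw [Finset.HasAntidiagonal.mem_antidiagonal] at ha hb
    exact hxy (ha ▸ hb)
  rw [← Finset.sum_biUnion hdisj]
  have hset : (Finset.range (M + 1)).biUnion (fun N => Finset.HasAntidiagonal.antidiagonal N) =
      (Finset.range (M + 1) ×ˢ Finset.range (M + 1)).filter (fun p => p.1 + p.2 ≤ M) := by
    ext ⟨a, b⟩
    simp only [Finset.mem_biUnion, Finset.mem_range, Finset.HasAntidiagonal.mem_antidiagonal,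
      Finset.mem_filter, Finset.mem_product]
    constructor
    · rintro ⟨N, hN, rfl⟩
      omega
    · intro h
      exact ⟨a + b, by omega, rfl⟩
  rw [hset]
  rw [← Finset.sum_product']
  rw [← Finset.sum_filter_add_sum_filter_not (Finset.range (M + 1) ×ˢ Finset.range (M + 1))
    (fun p => p.1 + p.2 ≤ M)]
  have : ∑ p ∈ (Finset.range (M + 1) ×ˢ Finset.range (M + 1)).filter
      (fun p => ¬ p.1 + p.2 ≤ M), c p.1 p.2 = 0 := by
    apply Finset.sum_eq_zero
    rintro ⟨a, b⟩ hab
    rw [Finset.mem_filter] at hab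
    exact hc a b (by omega)
  rw [this, add_zero]

theorem tauP_mul {P Q : PowerSeries (PowerSeries R)} (hP : OrdQ P) (hQ : OrdQ Q) :
    tauP (P * Q) = tauP P * tauP Q := by
  ext M
  set SP : PowerSeries R := ∑ a ∈ Finset.range (M + 1), coeff (R := (PowerSeries R)) a P with hSP
  set SQ : PowerSeries R := ∑ b ∈ Finset.range (M + 1), coeff (R := (PowerSeries R)) b Q with hSQ
  have hrhs : coeff (R := R) M (tauP P * tauP Q) = coeff (R := R) M (SP * SQ) := by
    rw [coeff_mul, coeff_mul]
    apply Finset.sum_congr rfl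
    rintro ⟨u, v⟩ huv
    rw [Finset.HasAntidiagonal.mem_antidiagonal] at huv
    congr 1
    · rw [tauP_coeff_stable hP (by omega : u < M + 1), hSP, map_sum]
    · rw [tauP_coeff_stable hQ (by omega : v < M + 1), hSQ, map_sum]
  rw [hrhs]
  rw [tauP_coeff]
  have hlhs : ∀ N, coeff (R := (PowerSeries R)) N (P * Q) =
      ∑ p ∈ Finset.HasAntidiagonal.antidiagonal N, coeff (R := (PowerSeries R)) p.1 P * coeff (R := (PowerSeries R)) p.2 Q :=
    fun N => coeff_mul N P Q
  calc ∑ N ∈ Finset.range (M + 1), coeff (R := R) M (coeff (R := (PowerSeries R)) N (P * Q))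
      = ∑ N ∈ Finset.range (M + 1), ∑ p ∈ Finset.HasAntidiagonal.antidiagonal N,
          coeff (R := R) M (coeff (R := (PowerSeries R)) p.1 P * coeff (R := (PowerSeries R)) p.2 Q) := by
        apply Finset.sum_congr rfl
        intro N _
        rw [hlhs N, map_sum]
    _ = ∑ a ∈ Finset.range (M + 1), ∑ b ∈ Finset.range (M + 1),
          coeff (R := R) M (coeff (R := (PowerSeries R)) a P * coeff (R := (PowerSeries R)) b Q) := by
        exact sum_antidiag_range
          (fun a b => coeff (R := R) M (coeff (R := (PowerSeries R)) a P * coeff (R := (PowerSeries R)) b Q))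
          (fun a b hab => ordQ_mul_coeff hP hQ hab)
    _ = coeff (R := R) M (SP * SQ) := by
        rw [hSP, hSQ, Finset.sum_mul_sum, map_sum]
        apply Finset.sum_congr rfl
        intro a _
        exact (map_sum _ _ _).symm


section EvalLemmas

variable {K : Type*} [Field K] [CharZero K]

theorem evalX_coeff (X : PowerSeries K) (f : PowerSeries K) (M : ℕ) :
    coeff (R := K) M (evalX X f) = ∑ m ∈ Finset.range (M + 1), coeff (R := K) m f * coeff (R := K) M (X ^ m) := by
  rw [evalX, coeff_mk, map_sum]
  apply Finset.sum_congr rfl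
  intro m _
  rw [coeff_C_mul]

theorem evalX_eq_tauP (X : PowerSeries K) (f : PowerSeries K) :
    evalX X f = tauP (PowerSeries.rescale X (PowerSeries.map (C (R := K)) f)) := by
  ext M
  rw [evalX_coeff, tauP_coeff]
  apply Finset.sum_congr rfl
  intro m _
  rw [coeff_rescale, coeff_map, coeff_mul_C, mul_comm]

theorem evalX_one (X : PowerSeries K) : evalX X 1 = 1 := by
  rw [evalX_eq_tauP, map_one, map_one, tauP_one]

theorem evalX_zero (X : PowerSeries K) : evalX X 0 = 0 := by
  ext M
  simp [evalX_coeff]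

theorem evalX_add (X : PowerSeries K) (f g : PowerSeries K) :
    evalX X (f + g) = evalX X f + evalX X g := by
  ext M
  simp [evalX_coeff, add_mul, Finset.sum_add_distrib]

theorem evalX_mul (X : PowerSeries K) (hX0 : constantCoeff (R := K) X = 0) (f g : PowerSeries K) :
    evalX X (f * g) = evalX X f * evalX X g := by
  rw [evalX_eq_tauP, evalX_eq_tauP, evalX_eq_tauP, map_mul, map_mul,
    tauP_mul (ordQ_rescale hX0 _) (ordQ_rescale hX0 _)]

/-- `evalX X` bundled as a ring homomorphism. -/
noncomputable def evalXhom (X : PowerSeries K) (hX0 : constantCoeff (R := K) X = 0) :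
    PowerSeries K →+* PowerSeries K where
  toFun := evalX X
  map_one' := evalX_one X
  map_mul' := evalX_mul X hX0
  map_zero' := evalX_zero X
  map_add' := evalX_add X

theorem evalX_C (X : PowerSeries K) (a : K) : evalX X (C (R := K) a) = C (R := K) a := by
  ext M
  rw [evalX_coeff, Finset.sum_eq_single 0]
  · simp [coeff_C, coeff_one]
  · intro m _ hm
    simp [coeff_C, hm]
  · simp

theorem evalX_X (X : PowerSeries K) (hX0 : constantCoeff (R := K) X = 0) :
    evalX X PowerSeries.X = X := by
  ext M
  rw [evalX_coeff]
  cases M with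
  | zero =>
    simp [coeff_zero_eq_constantCoeff, hX0]
  | succ n =>
    rw [Finset.sum_eq_single 1]
    · simp
    · intro m _ hm
      simp [PowerSeries.coeff_X, hm]
    · intro h
      simp at h

theorem evalXt_coeff (X : PowerSeries K) (F : PowerSeries (PowerSeries K)) (M : ℕ) :
    coeff (R := K) M (evalXt X F) =
      ∑ N ∈ Finset.range (M + 1), coeff (R := K) (M - N) (evalX X (coeff (R := (PowerSeries K)) N F)) :=
  coeff_mk _ _

theorem evalXt_eq_tauP (X : PowerSeries K) (hX0 : constantCoeff (R := K) X = 0)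
    (F : PowerSeries (PowerSeries K)) :
    evalXt X F = tauP (PowerSeries.rescale PowerSeries.X
      (PowerSeries.map (evalXhom X hX0) F)) := by
  ext M
  rw [evalXt_coeff, tauP_coeff]
  apply Finset.sum_congr rfl
  intro N hN
  rw [coeff_rescale, coeff_map]
  have h : (M - N) + N = M := by
    rw [Finset.mem_range] at hN
    omega
  conv_rhs => rw [← h]
  rw [coeff_X_pow_mul]
  rfl

theorem evalXt_mul (X : PowerSeries K) (hX0 : constantCoeff (R := K) X = 0)
    (A B : PowerSeries (PowerSeries K)) :
    evalXt X (A * B) = evalXt X A * evalXt X B := by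
  rw [evalXt_eq_tauP X hX0, evalXt_eq_tauP X hX0, evalXt_eq_tauP X hX0, map_mul, map_mul,
    tauP_mul (ordQ_rescale constantCoeff_X _) (ordQ_rescale constantCoeff_X _)]

theorem evalXt_add (X : PowerSeries K) (A B : PowerSeries (PowerSeries K)) :
    evalXt X (A + B) = evalXt X A + evalXt X B := by
  ext M
  simp [evalXt_coeff, evalX_add, Finset.sum_add_distrib]

theorem evalXt_C (X : PowerSeries K) (f : PowerSeries K) :
    evalXt X (C (R := (PowerSeries K)) f) = evalX X f := by
  ext M
  rw [evalXt_coeff, Finset.sum_eq_single 0]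
  · simp
  · intro N _ hN
    rw [coeff_C]
    simp [hN, evalX_zero]
  · simp

theorem evalXt_mapC (X : PowerSeries K) (g : PowerSeries K) :
    evalXt X (PowerSeries.map (C (R := K)) g) = g := by
  ext M
  rw [evalXt_coeff, Finset.sum_eq_single M]
  · rw [coeff_map, evalX_C]
    simp
  · intro N hN hNM
    rw [Finset.mem_range] at hN
    rw [coeff_map, evalX_C, coeff_C]
    have : M - N ≠ 0 := by omega
    simp [this]
  · intro h
    simp at h

end EvalLemmas

section Construction

variable {K : Type*} [Field K] [CharZero K]

/-- shift down: `f ↦ (f - f(0))/x`. -/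
noncomputable def shiftD (f : PowerSeries K) : PowerSeries K :=
  PowerSeries.mk fun n => coeff (R := K) (n + 1) f

theorem X_mul_shiftD (f : PowerSeries K) :
    PowerSeries.X * shiftD f = f - C (R := K) (constantCoeff (R := K) f) := by
  ext n
  cases n with
  | zero =>
    simp [coeff_zero_eq_constantCoeff, coeff_zero_eq_constantCoeff_apply]
  | succ n =>
    rw [coeff_succ_X_mul, shiftD, coeff_mk, map_sub, coeff_C]
    simp

theorem constantCoeff_shiftD (f : PowerSeries K) :
    constantCoeff (R := K) (shiftD f) = coeff (R := K) 1 f := by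
  rw [← coeff_zero_eq_constantCoeff, shiftD, coeff_mk]

/-- The coefficients (in `t`) of the cofactor `U` with `G = (x - X(t))·U`. -/
noncomputable def Useq (G : PowerSeries (PowerSeries K)) (X : PowerSeries K) :
    ℕ → PowerSeries K
  | N => shiftD (coeff (R := (PowerSeries K)) N G +
      ∑ i ∈ (Finset.range N).attach, C (R := K) (coeff (R := K) (N - i.1) X) * Useq G X i.1)
  termination_by N => N
  decreasing_by exact Finset.mem_range.mp i.2

/-- The argument of `shiftD` in the recursion for `Useq`. -/
noncomputable def Rfun (G : PowerSeries (PowerSeries K)) (X : PowerSeries K) (N : ℕ) :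
    PowerSeries K :=
  coeff (R := (PowerSeries K)) N G + ∑ i ∈ Finset.range N, C (R := K) (coeff (R := K) (N - i) X) * Useq G X i

theorem Useq_eq (G : PowerSeries (PowerSeries K)) (X : PowerSeries K) (N : ℕ) :
    Useq G X N = shiftD (Rfun G X N) := by
  rw [Useq, Rfun, Finset.sum_attach (Finset.range N) (fun i => C (R := K) (coeff (R := K) (N - i) X) * Useq G X i)]

/-- `x - X(t)` as an element of `K[[x]][[t]]`. -/
noncomputable def Pser (X : PowerSeries K) : PowerSeries (PowerSeries K) :=
  C (R := (PowerSeries K)) PowerSeries.X - PowerSeries.map (C (R := K)) X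

noncomputable def Ubig (G : PowerSeries (PowerSeries K)) (X : PowerSeries K) :
    PowerSeries (PowerSeries K) :=
  PowerSeries.mk (Useq G X)

noncomputable def cseq (G : PowerSeries (PowerSeries K)) (X : PowerSeries K) : PowerSeries K :=
  PowerSeries.mk fun N => constantCoeff (R := K) (Rfun G X N)

theorem coeff_Pser_zero (X : PowerSeries K) (hX0 : constantCoeff (R := K) X = 0) :
    coeff (R := (PowerSeries K)) 0 (Pser X) = PowerSeries.X := by
  rw [Pser, map_sub, coeff_zero_C, coeff_map, coeff_zero_eq_constantCoeff, hX0]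
  simp

theorem coeff_Pser_succ (X : PowerSeries K) (i : ℕ) :
    coeff (R := (PowerSeries K)) (i + 1) (Pser X) = - C (R := K) (coeff (R := K) (i + 1) X) := by
  rw [Pser, map_sub, coeff_C, coeff_map]
  simp

theorem Pser_mul_Ubig (G : PowerSeries (PowerSeries K)) (X : PowerSeries K)
    (hX0 : constantCoeff (R := K) X = 0) :
    Pser X * Ubig G X = G - PowerSeries.map (C (R := K)) (cseq G X) := by
  ext N : 1
  rw [coeff_mul, Finset.Nat.sum_antidiagonal_eq_sum_range_succ_mk, Finset.sum_range_succ']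
  have h1 : ∀ i ∈ Finset.range N,
      coeff (R := (PowerSeries K)) (i + 1) (Pser X) * coeff (R := (PowerSeries K)) (N - (i + 1)) (Ubig G X)
        = -(C (R := K) (coeff (R := K) (i + 1) X) * Useq G X (N - 1 - i)) := by
    intro i hi
    rw [coeff_Pser_succ, Ubig, coeff_mk, neg_mul]
    have hidx : N - (i + 1) = N - 1 - i := by omega
    rw [hidx]
  rw [Finset.sum_congr rfl h1, Finset.sum_neg_distrib]
  have h2 : ∑ i ∈ Finset.range N, C (R := K) (coeff (R := K) (i + 1) X) * Useq G X (N - 1 - i)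
      = ∑ i ∈ Finset.range N, C (R := K) (coeff (R := K) (N - i) X) * Useq G X i := by
    rw [← Finset.sum_range_reflect (fun i => C (R := K) (coeff (R := K) (N - i) X) * Useq G X i) N]
    apply Finset.sum_congr rfl
    intro i hi
    rw [Finset.mem_range] at hi
    have hidx : N - (N - 1 - i) = i + 1 := by omega
    rw [hidx]
  rw [h2]
  have h3 : coeff (R := (PowerSeries K)) 0 (Pser X) * coeff (R := (PowerSeries K)) (N - 0) (Ubig G X)
      = Rfun G X N - C (R := K) (constantCoeff (R := K) (Rfun G X N)) := by
    rw [coeff_Pser_zero X hX0, Ubig, coeff_mk, Nat.sub_zero, Useq_eq, X_mul_shiftD]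
  rw [h3, map_sub, coeff_map, cseq, coeff_mk, Rfun]
  ring

theorem evalXt_sub (X : PowerSeries K) (A B : PowerSeries (PowerSeries K)) :
    evalXt X (A - B) = evalXt X A - evalXt X B := by
  ext M
  simp [evalXt_coeff, evalX_coeff, sub_mul, Finset.sum_sub_distrib]

theorem evalXt_Pser (X : PowerSeries K) (hX0 : constantCoeff (R := K) X = 0) :
    evalXt X (Pser X) = 0 := by
  rw [Pser, evalXt_sub, evalXt_C, evalXt_mapC, evalX_X X hX0, sub_self]

/-- The factorization `G = (x - X(t))·U` in `K[[x]][[t]]`. -/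
theorem G_factor (G : PowerSeries (PowerSeries K)) (X : PowerSeries K)
    (hX0 : constantCoeff (R := K) X = 0) (hroot : evalXt X G = 0) :
    G = Pser X * Ubig G X := by
  have h1 := Pser_mul_Ubig G X hX0
  have h2 : G = Pser X * Ubig G X + PowerSeries.map (C (R := K)) (cseq G X) := by
    rw [h1]; ring
  have h3 : (0 : PowerSeries K) = cseq G X := by
    calc (0 : PowerSeries K) = evalXt X G := hroot.symm
      _ = evalXt X (Pser X * Ubig G X) + evalXt X (PowerSeries.map (C (R := K)) (cseq G X)) := by
          rw [← evalXt_add]; exact congrArg _ h2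
      _ = cseq G X := by
          rw [evalXt_mul X hX0, evalXt_Pser X hX0, zero_mul, zero_add, evalXt_mapC]
  have h4 : PowerSeries.map (C (R := K)) (cseq G X) = 0 := by
    rw [← h3, map_zero]
  rw [h4, add_zero] at h2
  exact h2

theorem constantCoeff_Ubig (G : PowerSeries (PowerSeries K)) (X : PowerSeries K) :
    constantCoeff (R := (PowerSeries K)) (Ubig G X) = Useq G X 0 := by
  rw [Ubig, PowerSeries.constantCoeff_mk]

theorem map_C_X_eq :
    PowerSeries.map (HahnSeries.ofPowerSeries ℤ K)
        (PowerSeries.C (R := (PowerSeries K)) PowerSeries.X)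
      = PowerSeries.C (R := (LaurentSeries K)) (HahnSeries.single (1 : ℤ) (1 : K)) := by
  ext N : 1
  rw [coeff_map, coeff_C, coeff_C]
  split_ifs with h
  · exact HahnSeries.ofPowerSeries_X
  · exact map_zero _

theorem derivativeFun_zero : PowerSeries.derivativeFun (0 : PowerSeries K) = 0 := by
  ext n
  simp [PowerSeries.derivativeFun, Derivation.toFun_eq_coe, PowerSeries.coeff_derivativeFun]

theorem derivativeFun_X : PowerSeries.derivativeFun (PowerSeries.X : PowerSeries K) = 1 := by
  ext n
  cases n with
  | zero => simp [PowerSeries.derivativeFun, Derivation.toFun_eq_coe, PowerSeries.coeff_derivativeFun, PowerSeries.coeff_X, coeff_one]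
  | succ n => simp [PowerSeries.derivativeFun, Derivation.toFun_eq_coe, PowerSeries.coeff_derivativeFun, PowerSeries.coeff_X, coeff_one]

theorem derivativeFun_sum {α : Type*} (s : Finset α) (f : α → PowerSeries K) :
    PowerSeries.derivativeFun (∑ i ∈ s, f i) = ∑ i ∈ s, PowerSeries.derivativeFun (f i) := by
  classical
  induction s using Finset.induction_on with
  | empty => simp [derivativeFun_zero]
  | insert _ _ h ih =>
    rw [Finset.sum_insert h, Finset.sum_insert h, PowerSeries.derivativeFun_add, ih]

theorem dX_coeff (A : PowerSeries (PowerSeries K)) (N : ℕ) :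
    coeff (R := (PowerSeries K)) N (dX A) = PowerSeries.derivativeFun (coeff (R := (PowerSeries K)) N A) :=
  coeff_mk _ _

theorem dX_mul (A B : PowerSeries (PowerSeries K)) :
    dX (A * B) = dX A * B + A * dX B := by
  ext N : 1
  rw [dX_coeff, coeff_mul, derivativeFun_sum, map_add, coeff_mul, coeff_mul]
  rw [← Finset.sum_add_distrib]
  apply Finset.sum_congr rfl
  rintro ⟨a, b⟩ _
  rw [PowerSeries.derivativeFun_mul, dX_coeff, dX_coeff]
  simp only [smul_eq_mul]
  ring

theorem dX_Pser (X : PowerSeries K) : dX (Pser X) = 1 := by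
  ext N : 1
  rw [dX_coeff]
  cases N with
  | zero =>
    rw [Pser, map_sub, coeff_zero_C, coeff_map, sub_eq_add_neg,
      PowerSeries.derivativeFun_add, derivativeFun_X, ← map_neg (C (R := K)),
      (show PowerSeries.derivativeFun (C (R := K) (-(coeff (R := K) 0 X))) = 0 from PowerSeries.derivative_C), add_zero, coeff_zero_eq_constantCoeff, map_one]
  | succ n =>
    rw [coeff_Pser_succ, ← map_neg (C (R := K)), (show PowerSeries.derivativeFun (C (R := K) (-(coeff (R := K) (n + 1) X))) = 0 from PowerSeries.derivative_C), coeff_one]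
    simp

end Construction

section Laurent

variable {K : Type*} [Field K] [CharZero K]

theorem hahn_coeff_sum {α : Type*} (s : Finset α) (f : α → HahnSeries ℤ K) (g : ℤ) :
    (∑ i ∈ s, f i).coeff g = ∑ i ∈ s, (f i).coeff g :=
  map_sum (HahnSeries.coeff.addMonoidHom g) f s

/-- The image of `X(t)` in `(K((x)))[[t]]`, with constant Laurent coefficients. -/
noncomputable def cbar (X : PowerSeries K) : PowerSeries (LaurentSeries K) :=
  PowerSeries.map ((HahnSeries.ofPowerSeries ℤ K).comp (C (R := K))) X

/-- `x⁻¹·X(t)` in `(K((x)))[[t]]`. -/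
noncomputable def wgeo (X : PowerSeries K) : PowerSeries (LaurentSeries K) :=
  C (R := (LaurentSeries K)) (HahnSeries.single (-1 : ℤ) (1 : K)) * cbar X

/-- The geometric series `x/(x - X(t)) = ∑ₖ X(t)^k x^{-k}`. -/
noncomputable def Tser (X : PowerSeries K) : PowerSeries (LaurentSeries K) :=
  PowerSeries.mk fun N =>
    coeff (R := (LaurentSeries K)) N (∑ k ∈ Finset.range (N + 1), (wgeo X) ^ k)

theorem constantCoeff_cbar (X : PowerSeries K) (hX0 : constantCoeff (R := K) X = 0) :
    constantCoeff (R := (LaurentSeries K)) (cbar X) = 0 := by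
  rw [← coeff_zero_eq_constantCoeff, cbar, coeff_map, coeff_zero_eq_constantCoeff, hX0, map_zero]

theorem constantCoeff_wgeo (X : PowerSeries K) (hX0 : constantCoeff (R := K) X = 0) :
    constantCoeff (R := (LaurentSeries K)) (wgeo X) = 0 := by
  rw [wgeo, map_mul, constantCoeff_cbar X hX0, mul_zero]

theorem geom_Tser (X : PowerSeries K) (hX0 : constantCoeff (R := K) X = 0) :
    (1 - wgeo X) * Tser X = 1 :=
  geom_aux (constantCoeff_wgeo X hX0)

theorem coeff_Tser (X : PowerSeries K) (u : ℕ) :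
    coeff (R := (LaurentSeries K)) u (Tser X) =
      ∑ k ∈ Finset.range (u + 1), HahnSeries.single (-(k : ℤ)) (coeff (R := K) u (X ^ k)) := by
  rw [Tser, coeff_mk, map_sum]
  apply Finset.sum_congr rfl
  intro k _
  rw [wgeo, mul_pow, ← map_pow (C (R := (LaurentSeries K))), coeff_C_mul, HahnSeries.single_pow,
    one_pow, cbar,
    ← map_pow (PowerSeries.map ((HahnSeries.ofPowerSeries ℤ K).comp (C (R := K)))), coeff_map,
    RingHom.comp_apply, HahnSeries.ofPowerSeries_C]
  have h1 : k • (-1 : ℤ) = -(k : ℤ) := by simp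
  rw [h1, HahnSeries.C_apply, HahnSeries.single_mul_single, add_zero, one_mul]

/-- The crux: the constant term in `x` of `(x/(x-X(t)))·H(x,t)` is `H(X(t),t)`. -/
theorem crux (X : PowerSeries K) (hX0 : constantCoeff (R := K) X = 0)
    (H : PowerSeries (PowerSeries K)) :
    (PowerSeries.mk fun M => (coeff (R := (LaurentSeries K)) M
        (Tser X * PowerSeries.map (HahnSeries.ofPowerSeries ℤ K) H)).coeff 0)
      = evalXt X H := by
  ext M
  rw [coeff_mk, coeff_mul, hahn_coeff_sum, Finset.Nat.sum_antidiagonal_eq_sum_range_succ_mk]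
  have hterm : ∀ u ∈ Finset.range (M + 1),
      (coeff (R := (LaurentSeries K)) u (Tser X) *
        coeff (R := (LaurentSeries K)) (M - u) (PowerSeries.map (HahnSeries.ofPowerSeries ℤ K) H)).coeff
          (0 : ℤ)
      = ∑ k ∈ Finset.range (u + 1),
          coeff (R := K) u (X ^ k) * coeff (R := K) k (coeff (R := (PowerSeries K)) (M - u) H) := by
    intro u _
    rw [coeff_Tser, coeff_map, Finset.sum_mul, hahn_coeff_sum]
    apply Finset.sum_congr rfl
    intro k _
    have h0 : (0 : ℤ) = (k : ℤ) + (-(k : ℤ)) := by ring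
    rw [h0, HahnSeries.coeff_single_mul_add, HahnSeries.ofPowerSeries_apply_coeff]
  rw [Finset.sum_congr rfl hterm, evalXt_coeff,
    ← Finset.sum_range_reflect
      (fun N => coeff (R := K) (M - N) (evalX X (coeff (R := (PowerSeries K)) N H))) (M + 1)]
  apply Finset.sum_congr rfl
  intro u hu
  rw [Finset.mem_range] at hu
  simp only [Nat.add_sub_cancel]
  have h1 : M - (M - u) = u := by omega
  rw [h1, evalX_coeff]
  apply Finset.sum_congr rfl
  intro k _
  ring

end Laurent

end LagrangeAux

set_option maxHeartbeats 2000000 in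
/-- **A generalization of the Lagrange inversion formula** (Theorem 2.4).
Let `G(x,t), F(x,t) ∈ K[[x,t]]`, viewed as elements of `K[[x]][[t]]` with outer
variable `t`.  Suppose `G(x,0) = a·x + (higher order terms in x)` with `a ≠ 0`,
and let `X = X(t) ∈ t·K[[t]]` be the (unique) such root of `G(X(t),t) = 0`.
Expanding `(x/G(x,t))·F(x,t)` as a Laurent series in `x` with coefficients in
`K[[t]]` (possible since `G(x,0)` has order `1` in `x`, so `G` is invertible
over `K((x))[[t]]`), its constant term in `x` satisfies
`CT_x (x/G)·F = F(X(t),t) / (∂G/∂x)(X(t),t)`, stated in cross-multiplied form. -/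
theorem lagrange_constant_term_eval
    (G F : PowerSeries (PowerSeries K))
    (h0 : PowerSeries.coeff (R := K) 0 (PowerSeries.constantCoeff (R := (PowerSeries K)) G) = 0)
    (ha : PowerSeries.coeff (R := K) 1 (PowerSeries.constantCoeff (R := (PowerSeries K)) G) ≠ 0)
    (X : PowerSeries K)
    (hX0 : PowerSeries.constantCoeff (R := K) X = 0)
    (hXroot : evalXt X G = 0) :
    (PowerSeries.mk fun n =>
        (PowerSeries.coeff (R := (LaurentSeries K)) n
          ((PowerSeries.C (R := (LaurentSeries K)) (HahnSeries.single (1 : ℤ) (1 : K)) *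
              PowerSeries.map (HahnSeries.ofPowerSeries ℤ K) F) *
            (PowerSeries.map (HahnSeries.ofPowerSeries ℤ K) G)⁻¹)).coeff 0)
      * evalXt X (dX G) = evalXt X F := by
  classical
  have hGfact : G = LagrangeAux.Pser X * LagrangeAux.Ubig G X :=
    LagrangeAux.G_factor G X hX0 hXroot
  -- `U` is a unit, with inverse `V`
  have hU0 : PowerSeries.constantCoeff (R := (PowerSeries K)) (LagrangeAux.Ubig G X)
      = LagrangeAux.Useq G X 0 := LagrangeAux.constantCoeff_Ubig G X
  have hU0c : PowerSeries.constantCoeff (R := K) (LagrangeAux.Useq G X 0)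
      = PowerSeries.coeff (R := K) 1 (PowerSeries.constantCoeff (R := (PowerSeries K)) G) := by
    rw [LagrangeAux.Useq_eq, LagrangeAux.constantCoeff_shiftD, LagrangeAux.Rfun]
    simp [PowerSeries.coeff_zero_eq_constantCoeff]
  have hUunit : IsUnit (LagrangeAux.Ubig G X) := by
    rw [PowerSeries.isUnit_iff_constantCoeff, hU0, PowerSeries.isUnit_iff_constantCoeff, hU0c]
    exact isUnit_iff_ne_zero.mpr ha
  obtain ⟨u, hu⟩ := hUunit
  set V : PowerSeries (PowerSeries K) := ((u⁻¹ : (PowerSeries (PowerSeries K))ˣ) :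
    PowerSeries (PowerSeries K)) with hV
  have hUV : LagrangeAux.Ubig G X * V = 1 := by
    rw [← hu, hV]
    exact_mod_cast u.mul_inv
  -- the Laurent series side
  have hG0 : PowerSeries.constantCoeff (R := (PowerSeries K)) G ≠ 0 := by
    intro h
    apply ha
    rw [h, map_zero]
  have hiG : PowerSeries.constantCoeff (R := (LaurentSeries K))
      (PowerSeries.map (HahnSeries.ofPowerSeries ℤ K) G) ≠ 0 := by
    rw [← PowerSeries.coeff_zero_eq_constantCoeff, PowerSeries.coeff_map,
      PowerSeries.coeff_zero_eq_constantCoeff]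
    intro h
    apply hG0
    apply HahnSeries.ofPowerSeries_injective (Γ := ℤ)
    rw [h, map_zero]
  have hcbar : PowerSeries.map (HahnSeries.ofPowerSeries ℤ K)
        (PowerSeries.map (PowerSeries.C (R := K)) X) = LagrangeAux.cbar X := by
    ext N : 1
    rw [PowerSeries.coeff_map, PowerSeries.coeff_map, LagrangeAux.cbar, PowerSeries.coeff_map,
      RingHom.comp_apply]
  have hxieta : (HahnSeries.single (1 : ℤ) (1 : K)) * (HahnSeries.single (-1 : ℤ) (1 : K))
      = 1 := by
    rw [HahnSeries.single_mul_single]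
    have h1 : (1 : ℤ) + (-1 : ℤ) = 0 := by norm_num
    rw [h1, one_mul, HahnSeries.single_zero_one]
  have hPfact : PowerSeries.map (HahnSeries.ofPowerSeries ℤ K) (LagrangeAux.Pser X)
      = PowerSeries.C (R := (LaurentSeries K)) (HahnSeries.single (1 : ℤ) (1 : K))
          * (1 - LagrangeAux.wgeo X) := by
    rw [LagrangeAux.Pser, map_sub, LagrangeAux.map_C_X_eq, hcbar,
      mul_sub, mul_one, LagrangeAux.wgeo, ← mul_assoc,
      ← map_mul (PowerSeries.C (R := (LaurentSeries K))), hxieta,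
      map_one (PowerSeries.C (R := (LaurentSeries K))), one_mul]
  have hinv : (PowerSeries.map (HahnSeries.ofPowerSeries ℤ K) G)⁻¹
      = LagrangeAux.Tser X * PowerSeries.map (HahnSeries.ofPowerSeries ℤ K) V
          * PowerSeries.C (R := (LaurentSeries K)) (HahnSeries.single (-1 : ℤ) (1 : K)) := by
    rw [PowerSeries.inv_eq_iff_mul_eq_one hiG]
    have hcalc : (LagrangeAux.Tser X * PowerSeries.map (HahnSeries.ofPowerSeries ℤ K) V
          * PowerSeries.C (R := (LaurentSeries K)) (HahnSeries.single (-1 : ℤ) (1 : K)))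
        * PowerSeries.map (HahnSeries.ofPowerSeries ℤ K) G
      = (PowerSeries.C (R := (LaurentSeries K)) (HahnSeries.single (1 : ℤ) (1 : K))
          * PowerSeries.C (R := (LaurentSeries K)) (HahnSeries.single (-1 : ℤ) (1 : K)))
        * ((1 - LagrangeAux.wgeo X) * LagrangeAux.Tser X)
        * (PowerSeries.map (HahnSeries.ofPowerSeries ℤ K) (LagrangeAux.Ubig G X)
            * PowerSeries.map (HahnSeries.ofPowerSeries ℤ K) V) := by
      conv_lhs => rw [hGfact]
      rw [map_mul, hPfact]
      ring
    rw [hcalc, LagrangeAux.geom_Tser X hX0,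
      ← map_mul (PowerSeries.map (HahnSeries.ofPowerSeries ℤ K)), hUV,
      map_one (PowerSeries.map (HahnSeries.ofPowerSeries ℤ K)),
      ← map_mul (PowerSeries.C (R := (LaurentSeries K))), hxieta,
      map_one (PowerSeries.C (R := (LaurentSeries K)))]
    simp
  have hexpr : (PowerSeries.C (R := (LaurentSeries K)) (HahnSeries.single (1 : ℤ) (1 : K)) *
        PowerSeries.map (HahnSeries.ofPowerSeries ℤ K) F) *
      (PowerSeries.map (HahnSeries.ofPowerSeries ℤ K) G)⁻¹
      = LagrangeAux.Tser X * PowerSeries.map (HahnSeries.ofPowerSeries ℤ K) (F * V) := by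
    rw [hinv, map_mul]
    have hcalc : (PowerSeries.C (R := (LaurentSeries K)) (HahnSeries.single (1 : ℤ) (1 : K)) *
          PowerSeries.map (HahnSeries.ofPowerSeries ℤ K) F) *
        (LagrangeAux.Tser X * PowerSeries.map (HahnSeries.ofPowerSeries ℤ K) V
          * PowerSeries.C (R := (LaurentSeries K)) (HahnSeries.single (-1 : ℤ) (1 : K)))
      = (PowerSeries.C (R := (LaurentSeries K)) (HahnSeries.single (1 : ℤ) (1 : K))
          * PowerSeries.C (R := (LaurentSeries K)) (HahnSeries.single (-1 : ℤ) (1 : K)))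
        * (LagrangeAux.Tser X * (PowerSeries.map (HahnSeries.ofPowerSeries ℤ K) F
            * PowerSeries.map (HahnSeries.ofPowerSeries ℤ K) V)) := by
      ring
    rw [hcalc, ← map_mul (PowerSeries.C (R := (LaurentSeries K))), hxieta,
      map_one (PowerSeries.C (R := (LaurentSeries K))), one_mul]
  have hmk : (PowerSeries.mk fun n =>
        (PowerSeries.coeff (R := (LaurentSeries K)) n
          ((PowerSeries.C (R := (LaurentSeries K)) (HahnSeries.single (1 : ℤ) (1 : K)) *
              PowerSeries.map (HahnSeries.ofPowerSeries ℤ K) F) *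
            (PowerSeries.map (HahnSeries.ofPowerSeries ℤ K) G)⁻¹)).coeff 0)
      = evalXt X (F * V) := by
    simp only [hexpr]
    exact LagrangeAux.crux X hX0 (F * V)
  have hdXG : evalXt X (dX G) = evalXt X (LagrangeAux.Ubig G X) := by
    have h5 : dX G = dX (LagrangeAux.Pser X * LagrangeAux.Ubig G X) := by
      conv_lhs => rw [hGfact]
    rw [h5, LagrangeAux.dX_mul, LagrangeAux.dX_Pser, one_mul, LagrangeAux.evalXt_add,
      LagrangeAux.evalXt_mul X hX0, LagrangeAux.evalXt_Pser X hX0, zero_mul, add_zero]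
  rw [hmk, hdXG, ← LagrangeAux.evalXt_mul X hX0, mul_assoc, mul_comm V, hUV, mul_one]
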